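/- In the coordinate ARH(1) estimation model, for every n ≥ 2 the quantity E‖ρ − ρ̂_{k_n}‖²_{S(H)} = Σ_{j=1}^{k_n} E[(ρ_j − ρ̂_{n,j})²] + Σ_{j=k_n+1}^{∞} ρ_j² is bounded above by g(n) := ( 2 S (n/(n−1))² / (C_{k_n}² n) ) · Σ_{j=1}^{k_n} C_j² + Σ_{j=k_n+1}^{∞} ρ_j², and lim_{n→∞} [ Σ_{j=1}^{k_n} E[(ρ_j − ρ̂_{n,j})²] + Σ_{j=k_n+1}^{∞} ρ_j² ] = 0. -/

import Mathlib

open MeasureTheory Filter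

/-- The componentwise moment-based estimator
`ρ̂_{n,j} = (n/(n-1)) · (Σ_{i=0}^{n-2} η_j(i) η_j(i+1)) / (Σ_{i=0}^{n-1} η_j(i)²)`. -/
noncomputable def rhoHat {Ω : Type*} (η : ℕ → ℕ → Ω → ℝ) (n j : ℕ) (ω : Ω) : ℝ :=
  (n : ℝ) / ((n : ℝ) - 1) *
    (∑ i ∈ Finset.range (n - 1), η j i ω * η j (i + 1) ω) /
    ∑ i ∈ Finset.range n, η j i ω ^ 2

lemma abs_shift_sum_le (f : ℕ → ℝ) (n : ℕ) (hn : 1 ≤ n) :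
    |∑ i ∈ Finset.range (n - 1), f i * f (i + 1)| ≤ ∑ i ∈ Finset.range n, f i ^ 2 := by
  obtain ⟨m, rfl⟩ : ∃ m, n = m + 1 := ⟨n - 1, by omega⟩
  have h1 : |∑ i ∈ Finset.range m, f i * f (i + 1)|
      ≤ ∑ i ∈ Finset.range m, (f i ^ 2 + f (i + 1) ^ 2) / 2 := by
    refine (Finset.abs_sum_le_sum_abs _ _).trans (Finset.sum_le_sum fun i _ => ?_)
    rw [abs_le]
    constructor
    · nlinarith [sq_nonneg (f i + f (i + 1))]
    · nlinarith [sq_nonneg (f i - f (i + 1))]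
  have h2 : ∑ i ∈ Finset.range m, f i ^ 2 ≤ ∑ i ∈ Finset.range (m + 1), f i ^ 2 :=
    Finset.sum_le_sum_of_subset_of_nonneg (Finset.range_subset_range.2 (by omega))
      (fun i _ _ => sq_nonneg _)
  have h3 : ∑ i ∈ Finset.range m, f (i + 1) ^ 2 ≤ ∑ i ∈ Finset.range (m + 1), f i ^ 2 := by
    rw [Finset.sum_range_succ' (fun i => f i ^ 2) m]
    nlinarith [sq_nonneg (f 0)]
  have h4 : ∑ i ∈ Finset.range m, (f i ^ 2 + f (i + 1) ^ 2) / 2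
      = ((∑ i ∈ Finset.range m, f i ^ 2) + ∑ i ∈ Finset.range m, f (i + 1) ^ 2) / 2 := by
    rw [← Finset.sum_add_distrib, ← Finset.sum_div]
  simp only [Nat.add_sub_cancel] at *
  linarith [h1]

lemma pt_bound (x T U : ℝ) (n : ℕ) (hn : 2 ≤ n) (hU : 0 < U) (hT : |T| ≤ U) :
    (x - (n : ℝ) / ((n : ℝ) - 1) * T / U) ^ 2
      ≤ 2 * (x - 1 / ((n : ℝ) - 1) * T) ^ 2
        + 2 * ((n : ℝ) / ((n : ℝ) - 1)) ^ 2 * (1 - 1 / (n : ℝ) * U) ^ 2 := by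
  have hn2 : (2 : ℝ) ≤ (n : ℝ) := by exact_mod_cast hn
  have hn1 : (0 : ℝ) < (n : ℝ) - 1 := by linarith
  have hn0 : (0 : ℝ) < (n : ℝ) := by linarith
  set c : ℝ := (n : ℝ) / ((n : ℝ) - 1) with hc
  have hcpos : 0 < c := div_pos hn0 hn1
  set r : ℝ := c * T / U with hrdef
  have hr : |r| ≤ c := by
    rw [hrdef, abs_div, abs_mul, abs_of_pos hcpos, abs_of_pos hU, div_le_iff₀ hU]
    nlinarith
  have hr2 : r ^ 2 ≤ c ^ 2 := by
    have := pow_le_pow_left₀ (abs_nonneg r) hr 2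
    rwa [sq_abs] at this
  have key : x - r = (x - 1 / ((n : ℝ) - 1) * T) - r * (1 - 1 / (n : ℝ) * U) := by
    rw [hrdef, hc]
    field_simp
    ring
  rw [show x - c * T / U = x - r from rfl, key]
  nlinarith [sq_nonneg ((x - 1 / ((n : ℝ) - 1) * T) + r * (1 - 1 / (n : ℝ) * U)),
    mul_le_mul_of_nonneg_right hr2 (sq_nonneg (1 - 1 / (n : ℝ) * U))]


/-- in the coordinate ARH(1) estimation model, the squared Hilbert–Schmidt
error `Σ_{j=1}^{k_n} E[(ρ_j − ρ̂_{n,j})²] + Σ_{j>k_n} ρ_j²` is bounded by `g(n)` and tends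
to `0`. -/
theorem stmt9 {Ω : Type*} [MeasurableSpace Ω] (P : Measure Ω) [IsProbabilityMeasure P]
    (C : ℕ → ℝ) (hCpos : ∀ j, 1 ≤ j → 0 < C j)
    (hCmono : ∀ i j : ℕ, 1 ≤ i → i ≤ j → C j ≤ C i)
    (hCsum : Summable fun j : ℕ => C (j + 1))
    (ρ : ℕ → ℝ) (hρ2 : Summable fun j : ℕ => ρ (j + 1) ^ 2)
    (η : ℕ → ℕ → Ω → ℝ) (hηm : ∀ j i, Measurable (η j i))
    (hpos : ∀ j n : ℕ, 1 ≤ j → 1 ≤ n →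
      ∀ᵐ ω ∂P, 0 < ∑ i ∈ Finset.range n, η j i ω ^ 2)
    (K1 K2 : ℕ → ℝ) (hK1 : ∀ j, 0 ≤ K1 j) (hK2 : ∀ j, 0 ≤ K2 j)
    (S : ℝ) (hS : ∀ j, 1 ≤ j → K1 j + K2 j ≤ S)
    (hA41int : ∀ n j : ℕ, 2 ≤ n → 1 ≤ j → Integrable
      (fun ω => (1 - 1 / (n : ℝ) * ∑ i ∈ Finset.range n, η j i ω ^ 2) ^ 2) P)
    (hA41 : ∀ n j : ℕ, 2 ≤ n → 1 ≤ j →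
      ∫ ω, (1 - 1 / (n : ℝ) * ∑ i ∈ Finset.range n, η j i ω ^ 2) ^ 2 ∂P ≤ K1 j / n)
    (hA42int : ∀ n j : ℕ, 2 ≤ n → 1 ≤ j → Integrable
      (fun ω => (ρ j - 1 / ((n : ℝ) - 1) *
        ∑ i ∈ Finset.range (n - 1), η j i ω * η j (i + 1) ω) ^ 2) P)
    (hA42 : ∀ n j : ℕ, 2 ≤ n → 1 ≤ j →
      ∫ ω, (ρ j - 1 / ((n : ℝ) - 1) *
        ∑ i ∈ Finset.range (n - 1), η j i ω * η j (i + 1) ω) ^ 2 ∂P ≤ K2 j / n)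
    (k : ℕ → ℕ) (hk : Tendsto k atTop atTop)
    (hA3 : Tendsto (fun n : ℕ => (n : ℝ) * C (k n) ^ 2) atTop atTop) :
    (∀ n : ℕ, 2 ≤ n →
      (∑ j ∈ Finset.Icc 1 (k n), ∫ ω, (ρ j - rhoHat η n j ω) ^ 2 ∂P)
          + ∑' j : ℕ, ρ (k n + 1 + j) ^ 2
        ≤ 2 * S * ((n : ℝ) / ((n : ℝ) - 1)) ^ 2 / (C (k n) ^ 2 * n) *
              (∑ j ∈ Finset.Icc 1 (k n), C j ^ 2)
            + ∑' j : ℕ, ρ (k n + 1 + j) ^ 2) ∧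
    Tendsto (fun n : ℕ =>
        (∑ j ∈ Finset.Icc 1 (k n), ∫ ω, (ρ j - rhoHat η n j ω) ^ 2 ∂P)
          + ∑' j : ℕ, ρ (k n + 1 + j) ^ 2)
      atTop (nhds 0) := by
  have hS0 : 0 ≤ S := le_trans (add_nonneg (hK1 1) (hK2 1)) (hS 1 le_rfl)
  -- per-coordinate integral bound
  have key : ∀ n j : ℕ, 2 ≤ n → 1 ≤ j →
      ∫ ω, (ρ j - rhoHat η n j ω) ^ 2 ∂P
        ≤ 2 * S * ((n : ℝ) / ((n : ℝ) - 1)) ^ 2 / n := by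
    intro n j hn hj
    have hn2 : (2 : ℝ) ≤ (n : ℝ) := by exact_mod_cast hn
    have hnpos : (0 : ℝ) < (n : ℝ) := by linarith
    set c : ℝ := (n : ℝ) / ((n : ℝ) - 1) with hc
    have hc1 : 1 ≤ c := by
      rw [hc, le_div_iff₀ (by linarith)]; linarith
    have hc2 : 1 ≤ c ^ 2 := by nlinarith
    have hI2 := hA42int n j hn hj
    have hI1 := hA41int n j hn hj
    have hgint : Integrable (fun ω =>
        2 * (ρ j - 1 / ((n : ℝ) - 1) *
            ∑ i ∈ Finset.range (n - 1), η j i ω * η j (i + 1) ω) ^ 2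
          + 2 * c ^ 2 * (1 - 1 / (n : ℝ) * ∑ i ∈ Finset.range n, η j i ω ^ 2) ^ 2) P :=
      (hI2.const_mul 2).add (hI1.const_mul (2 * c ^ 2))
    have hle : ∀ᵐ ω ∂P, (ρ j - rhoHat η n j ω) ^ 2 ≤
        2 * (ρ j - 1 / ((n : ℝ) - 1) *
            ∑ i ∈ Finset.range (n - 1), η j i ω * η j (i + 1) ω) ^ 2
          + 2 * c ^ 2 * (1 - 1 / (n : ℝ) * ∑ i ∈ Finset.range n, η j i ω ^ 2) ^ 2 := by
      filter_upwards [hpos j n hj (by omega)] with ω hω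
      simp only [rhoHat, hc]
      exact pt_bound (ρ j) _ _ n hn hω (abs_shift_sum_le (fun i => η j i ω) n (by omega))
    have hnum : 2 * K2 j + 2 * c ^ 2 * K1 j ≤ 2 * S * c ^ 2 := by
      nlinarith [hK1 j, hK2 j, hS j hj]
    calc ∫ ω, (ρ j - rhoHat η n j ω) ^ 2 ∂P
        ≤ ∫ ω, (2 * (ρ j - 1 / ((n : ℝ) - 1) *
            ∑ i ∈ Finset.range (n - 1), η j i ω * η j (i + 1) ω) ^ 2
          + 2 * c ^ 2 * (1 - 1 / (n : ℝ) * ∑ i ∈ Finset.range n, η j i ω ^ 2) ^ 2) ∂P :=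
          integral_mono_of_nonneg (Eventually.of_forall fun ω => sq_nonneg _) hgint hle
      _ = 2 * (∫ ω, (ρ j - 1 / ((n : ℝ) - 1) *
            ∑ i ∈ Finset.range (n - 1), η j i ω * η j (i + 1) ω) ^ 2 ∂P)
          + 2 * c ^ 2 * ∫ ω, (1 - 1 / (n : ℝ) * ∑ i ∈ Finset.range n, η j i ω ^ 2) ^ 2 ∂P := by
          rw [integral_add (hI2.const_mul 2) (hI1.const_mul (2 * c ^ 2)),
            integral_const_mul, integral_const_mul]
      _ ≤ 2 * (K2 j / n) + 2 * c ^ 2 * (K1 j / n) := by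
          have h1 := hA41 n j hn hj
          have h2 := hA42 n j hn hj
          have e1 : (0:ℝ) ≤ 2 * c ^ 2 := by positivity
          exact add_le_add (mul_le_mul_of_nonneg_left h2 (by norm_num))
            (mul_le_mul_of_nonneg_left h1 e1)
      _ = (2 * K2 j + 2 * c ^ 2 * K1 j) / n := by ring
      _ ≤ 2 * S * c ^ 2 / n := by
          rw [div_le_div_iff₀ hnpos hnpos]
          exact mul_le_mul_of_nonneg_right hnum hnpos.le
  -- part 1
  have part1 : ∀ n : ℕ, 2 ≤ n →
      (∑ j ∈ Finset.Icc 1 (k n), ∫ ω, (ρ j - rhoHat η n j ω) ^ 2 ∂P)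
          + ∑' j : ℕ, ρ (k n + 1 + j) ^ 2
        ≤ 2 * S * ((n : ℝ) / ((n : ℝ) - 1)) ^ 2 / (C (k n) ^ 2 * n) *
              (∑ j ∈ Finset.Icc 1 (k n), C j ^ 2)
            + ∑' j : ℕ, ρ (k n + 1 + j) ^ 2 := by
    intro n hn
    have hn2 : (2 : ℝ) ≤ (n : ℝ) := by exact_mod_cast hn
    have hnpos : (0 : ℝ) < (n : ℝ) := by linarith
    have hsum : (∑ j ∈ Finset.Icc 1 (k n), ∫ ω, (ρ j - rhoHat η n j ω) ^ 2 ∂P)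
        ≤ ∑ j ∈ Finset.Icc 1 (k n),
            2 * S * ((n : ℝ) / ((n : ℝ) - 1)) ^ 2 / (C (k n) ^ 2 * n) * C j ^ 2 := by
      refine Finset.sum_le_sum fun j hj => ?_
      obtain ⟨hj1, hj2⟩ := Finset.mem_Icc.1 hj
      have hCk : 0 < C (k n) := hCpos _ (le_trans hj1 hj2)
      have hCj : C (k n) ≤ C j := hCmono j (k n) hj1 hj2
      refine (key n j hn hj1).trans ?_
      have heq : 2 * S * ((n : ℝ) / ((n : ℝ) - 1)) ^ 2 / (n : ℝ)
          = 2 * S * ((n : ℝ) / ((n : ℝ) - 1)) ^ 2 / (C (k n) ^ 2 * n) * C (k n) ^ 2 := by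
        have hCne : C (k n) ≠ 0 := ne_of_gt hCk
        have hnne : (n : ℝ) ≠ 0 := ne_of_gt hnpos
        have hn1ne : (n : ℝ) - 1 ≠ 0 := by intro h; nlinarith
        field_simp
      rw [heq]
      refine mul_le_mul_of_nonneg_left ?_ ?_
      · exact pow_le_pow_left₀ hCk.le hCj 2
      · exact div_nonneg (by positivity) (by positivity)
    rw [← Finset.mul_sum] at hsum
    linarith
  refine ⟨part1, ?_⟩
  -- part 2 : tendsto 0
  set B : ℝ := C 1 * ∑' j : ℕ, C (j + 1) with hBdef
  have hC1 : 0 < C 1 := hCpos 1 le_rfl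
  have htsC : 0 ≤ ∑' j : ℕ, C (j + 1) := tsum_nonneg fun j => (hCpos (j + 1) (by omega)).le
  have hB0 : 0 ≤ B := mul_nonneg hC1.le htsC
  have hB : ∀ m : ℕ, ∑ j ∈ Finset.Icc 1 m, C j ^ 2 ≤ B := by
    intro m
    have h1 : ∑ j ∈ Finset.Icc 1 m, C j ^ 2 ≤ ∑ j ∈ Finset.Icc 1 m, C 1 * C j := by
      refine Finset.sum_le_sum fun j hj => ?_
      obtain ⟨hj1, _⟩ := Finset.mem_Icc.1 hj
      have h := hCmono 1 j le_rfl hj1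
      have := hCpos j hj1
      nlinarith
    have hIr : ∀ m : ℕ, ∑ j ∈ Finset.Icc 1 m, C j = ∑ i ∈ Finset.range m, C (i + 1) := by
      intro m
      induction m with
      | zero => simp
      | succ m ih =>
        rw [Finset.sum_Icc_succ_top (by omega : 1 ≤ m + 1), ih, Finset.sum_range_succ]
    have h2 : ∑ j ∈ Finset.Icc 1 m, C j ≤ ∑' j : ℕ, C (j + 1) := by
      rw [hIr m]
      exact Summable.sum_le_tsum (Finset.range m) (fun i _ => (hCpos (i + 1) (by omega)).le) hCsum
    calc ∑ j ∈ Finset.Icc 1 m, C j ^ 2 ≤ ∑ j ∈ Finset.Icc 1 m, C 1 * C j := h1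
      _ = C 1 * ∑ j ∈ Finset.Icc 1 m, C j := (Finset.mul_sum _ _ _).symm
      _ ≤ B := by rw [hBdef]; exact mul_le_mul_of_nonneg_left h2 hC1.le
  -- tail tendsto 0
  have htail0 : Tendsto (fun m : ℕ => ∑' j : ℕ, ρ (m + 1 + j) ^ 2) atTop (nhds 0) := by
    have h := tendsto_sum_nat_add (fun j : ℕ => ρ (j + 1) ^ 2)
    refine h.congr fun m => tsum_congr fun j => ?_
    rw [show j + m + 1 = m + 1 + j from by omega]
  have htail : Tendsto (fun n : ℕ => ∑' j : ℕ, ρ (k n + 1 + j) ^ 2) atTop (nhds 0) :=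
    htail0.comp hk
  have hZ : Tendsto (fun n : ℕ => 8 * S * B * (((n : ℝ) * C (k n) ^ 2)⁻¹)) atTop (nhds 0) := by
    have := hA3.inv_tendsto_atTop
    simpa using this.const_mul (8 * S * B)
  have hglim : Tendsto (fun n : ℕ =>
      8 * S * B * (((n : ℝ) * C (k n) ^ 2)⁻¹) + ∑' j : ℕ, ρ (k n + 1 + j) ^ 2)
      atTop (nhds 0) := by
    simpa using hZ.add htail
  refine squeeze_zero' ?_ ?_ hglim
  · refine Eventually.of_forall fun n => ?_
    exact add_nonneg (Finset.sum_nonneg fun j _ => integral_nonneg fun ω => sq_nonneg _)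
      (tsum_nonneg fun j => sq_nonneg _)
  · filter_upwards [eventually_ge_atTop 2, hk.eventually_ge_atTop 1] with n hn hkn
    have hn2 : (2 : ℝ) ≤ (n : ℝ) := by exact_mod_cast hn
    have hnpos : (0 : ℝ) < (n : ℝ) := by linarith
    have hCk : 0 < C (k n) := hCpos _ hkn
    set c : ℝ := (n : ℝ) / ((n : ℝ) - 1) with hc
    have hc0 : 0 ≤ c := div_nonneg hnpos.le (by linarith)
    have hcle : c ≤ 2 := by
      rw [hc, div_le_iff₀ (by linarith)]; linarith
    have hc4 : c ^ 2 ≤ 4 := by nlinarith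
    have hx : (0 : ℝ) < C (k n) ^ 2 * (n : ℝ) := by positivity
    have hstep : 2 * S * c ^ 2 / (C (k n) ^ 2 * n) * (∑ j ∈ Finset.Icc 1 (k n), C j ^ 2)
        ≤ 8 * S * B * (((n : ℝ) * C (k n) ^ 2)⁻¹) := by
      have hcoef0 : 0 ≤ 2 * S * c ^ 2 / (C (k n) ^ 2 * n) :=
        div_nonneg (mul_nonneg (mul_nonneg (by norm_num) hS0) (sq_nonneg c)) hx.le
      calc 2 * S * c ^ 2 / (C (k n) ^ 2 * n) * (∑ j ∈ Finset.Icc 1 (k n), C j ^ 2)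
          ≤ 2 * S * c ^ 2 / (C (k n) ^ 2 * n) * B :=
            mul_le_mul_of_nonneg_left (hB (k n)) hcoef0
        _ = (2 * S * c ^ 2 * B) / (C (k n) ^ 2 * n) := by ring
        _ ≤ (8 * S * B) / (C (k n) ^ 2 * n) := by
            rw [div_le_div_iff₀ hx hx]
            have : 2 * S * c ^ 2 * B ≤ 8 * S * B := by
              nlinarith [mul_le_mul_of_nonneg_left hc4 (mul_nonneg hS0 hB0)]
            exact mul_le_mul_of_nonneg_right this hx.le
        _ = 8 * S * B * (((n : ℝ) * C (k n) ^ 2)⁻¹) := by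
            rw [div_eq_mul_inv, mul_comm (C (k n) ^ 2) ((n : ℝ))]
    have := part1 n hn
    rw [hc] at hstep
    linarith
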